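/- Let G = (V,E) be an undirected connected simple graph, (i,j) ∈ E an edge, and T_ij the number of common neighbors of i and j. Let L_G be the Laplacian of G and L_G⁺ its Moore–Penrose pseudoinverse. Then the effective resistance of the edge satisfies (e_i − e_j)^T L_G⁺ (e_i − e_j) ≤ 2/(T_ij + 2). -/

import Mathlib

open Matrix

/-- `M` is the Moore–Penrose pseudoinverse of `L`: the four Penrose conditions. -/
def IsMoorePenroseInverse {V : Type*} [Fintype V] [DecidableEq V]
    (L M : Matrix V V ℝ) : Prop :=
  L * M * L = L ∧ M * L * M = M ∧ (L * M)ᵀ = L * M ∧ (M * L)ᵀ = M * L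

section Aux

variable {V : Type*} [Fintype V] [DecidableEq V]

/-- The MP pseudoinverse of a symmetric real matrix is symmetric. -/
lemma mp_transpose_eq {L M : Matrix V V ℝ} (hL : Lᵀ = L)
    (h : IsMoorePenroseInverse L M) : Mᵀ = M := by
  obtain ⟨h1, h2, h3, h4⟩ := h
  have e3 : Mᵀ * L = L * M := by
    have := h3; rwa [transpose_mul, hL] at this
  have e4 : L * Mᵀ = M * L := by
    have := h4; rwa [transpose_mul, hL] at this
  have hN1 : L * (Mᵀ * L) = L := by
    have := congrArg transpose h1
    rwa [transpose_mul, transpose_mul, hL] at this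
  have hN2 : Mᵀ * (L * Mᵀ) = Mᵀ := by
    have := congrArg transpose h2
    rwa [transpose_mul, transpose_mul, hL] at this
  have p1 : M * (Mᵀ * L) = M := by
    rw [e3, ← mul_assoc, h2]
  have p3 : M = M * (M * L) := by
    calc M = M * (Mᵀ * L) := p1.symm
    _ = M * (Mᵀ * (L * M * L)) := by rw [h1]
    _ = (M * (Mᵀ * L)) * (M * L) := by noncomm_ring
    _ = M * (M * L) := by rw [p1]
  have sM : M = M * L * Mᵀ := by
    calc M = M * (M * L) := p3
    _ = M * (L * Mᵀ) := by rw [e4]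
    _ = M * L * Mᵀ := by rw [mul_assoc]
  have q0 : Mᵀ = L * (M * Mᵀ) := by
    calc Mᵀ = Mᵀ * (L * Mᵀ) := hN2.symm
    _ = (Mᵀ * L) * Mᵀ := by rw [mul_assoc]
    _ = (L * M) * Mᵀ := by rw [e3]
    _ = L * (M * Mᵀ) := by rw [mul_assoc]
  have sN : Mᵀ = M * L * Mᵀ := by
    calc Mᵀ = L * (M * Mᵀ) := q0
    _ = (L * (Mᵀ * L)) * (M * Mᵀ) := by rw [hN1]
    _ = (L * Mᵀ) * (L * (M * Mᵀ)) := by noncomm_ring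
    _ = (L * Mᵀ) * Mᵀ := by rw [← q0]
    _ = M * L * Mᵀ := by rw [e4]
  rw [sN, ← sM]

/-- `(A *ᵥ u) ⬝ᵥ w = u ⬝ᵥ (Aᵀ *ᵥ w)`. -/
lemma mulVec_dotProduct_eq {m n : Type*} [Fintype m] [Fintype n]
    (A : Matrix m n ℝ) (u : n → ℝ) (w : m → ℝ) :
    (A *ᵥ u) ⬝ᵥ w = u ⬝ᵥ (Aᵀ *ᵥ w) := by
  rw [dotProduct_mulVec, vecMul_transpose, dotProduct_comm]

/-- `(M x)ᵀ L (M x) = xᵀ M x` when `M L M = M` and `M` symmetric. -/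
lemma sandwich_eq (L M : Matrix V V ℝ) (hMT : Mᵀ = M) (h2 : M * L * M = M)
    (x : V → ℝ) : (M *ᵥ x) ⬝ᵥ (L *ᵥ (M *ᵥ x)) = x ⬝ᵥ (M *ᵥ x) := by
  rw [mulVec_dotProduct_eq, hMT]
  congr 1
  rw [mulVec_mulVec, mulVec_mulVec, h2]

lemma dotProduct_sum' {n κ : Type*} [Fintype n] (u : n → ℝ) (S : Finset κ)
    (w : κ → n → ℝ) : u ⬝ᵥ (∑ k ∈ S, w k) = ∑ k ∈ S, u ⬝ᵥ w k := by
  simp only [dotProduct, Finset.sum_apply, Finset.mul_sum]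
  exact Finset.sum_comm

variable (G : SimpleGraph V) [DecidableRel G.Adj]

/-- A (symmetrized, ordered-pairs) incidence matrix: column `(a,b)` is
`e_a - e_b` if `a ∼ b`, and `0` otherwise. -/
def incidence : Matrix V (V × V) ℝ := fun v p =>
  if G.Adj p.1 p.2 then (if v = p.1 then 1 else 0) - (if v = p.2 then 1 else 0) else 0

lemma incidence_transpose_mulVec (y : V → ℝ) (p : V × V) :
    ((incidence G)ᵀ *ᵥ y) p = if G.Adj p.1 p.2 then y p.1 - y p.2 else 0 := by
  simp only [mulVec, transpose_apply, dotProduct, incidence]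
  split_ifs with h
  · simp [sub_mul, ite_mul, Finset.sum_sub_distrib]
  · simp

/-- The quadratic identity `‖Cᵀ y‖² = 2 yᵀ L y`. -/
lemma incidence_quad (y : V → ℝ) :
    ((incidence G)ᵀ *ᵥ y) ⬝ᵥ ((incidence G)ᵀ *ᵥ y)
      = 2 * (y ⬝ᵥ (G.lapMatrix ℝ *ᵥ y)) := by
  have h1 : y ⬝ᵥ (G.lapMatrix ℝ *ᵥ y)
      = (∑ a : V, ∑ b : V, if G.Adj a b then (y a - y b)^2 else 0) / 2 := by
    rw [← Matrix.toLinearMap₂'_apply', SimpleGraph.lapMatrix_toLinearMap₂']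
  rw [h1]
  have h2 : ((incidence G)ᵀ *ᵥ y) ⬝ᵥ ((incidence G)ᵀ *ᵥ y)
      = ∑ a : V, ∑ b : V, if G.Adj a b then (y a - y b)^2 else 0 := by
    rw [dotProduct, ← Fintype.sum_prod_type']
    refine Finset.sum_congr rfl fun p _ => ?_
    rw [incidence_transpose_mulVec]
    split_ifs <;> ring
  rw [h2]; ring

/-- Key inequality: for any `f`, `(C f)ᵀ M (C f) ≤ 2 ‖f‖²`. -/
lemma key_ineq (M : Matrix V V ℝ) (hM : IsMoorePenroseInverse (G.lapMatrix ℝ) M)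
    (f : V × V → ℝ) :
    (incidence G *ᵥ f) ⬝ᵥ (M *ᵥ (incidence G *ᵥ f)) ≤ 2 * (f ⬝ᵥ f) := by
  have hLT : (G.lapMatrix ℝ)ᵀ = G.lapMatrix ℝ := (SimpleGraph.isSymm_lapMatrix ℝ G)
  have hMT : Mᵀ = M := mp_transpose_eq hLT hM
  obtain ⟨h1, h2, h3, h4⟩ := hM
  set L := G.lapMatrix ℝ with hL
  set x := incidence G *ᵥ f with hx
  set y := M *ᵥ x with hy
  set p := (incidence G)ᵀ *ᵥ y with hp
  have c2 : y ⬝ᵥ (L *ᵥ y) = x ⬝ᵥ y := sandwich_eq L M hMT h2 x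
  have c3 : x ⬝ᵥ y = f ⬝ᵥ p := by
    rw [hx, mulVec_dotProduct_eq]
  have c1 : p ⬝ᵥ p = 2 * (f ⬝ᵥ p) := by
    rw [hp, incidence_quad, c2, c3]
  have nonneg : (0:ℝ) ≤ (f - (1/2 : ℝ) • p) ⬝ᵥ (f - (1/2 : ℝ) • p) :=
    Finset.sum_nonneg fun _ _ => mul_self_nonneg _
  have expand : (f - (1/2 : ℝ) • p) ⬝ᵥ (f - (1/2 : ℝ) • p)
      = f ⬝ᵥ f - (1/2 : ℝ) * (f ⬝ᵥ p) := by
    rw [dotProduct_sub, sub_dotProduct, sub_dotProduct, dotProduct_smul, dotProduct_smul,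
      smul_dotProduct, smul_dotProduct, dotProduct_comm p f, smul_eq_mul, smul_eq_mul,
      smul_eq_mul, c1]
    ring
  rw [expand] at nonneg
  have hfin : x ⬝ᵥ (M *ᵥ x) = f ⬝ᵥ p := by rw [← hy, c3]
  rw [hfin]
  linarith

end Aux

/-- For an edge `(i,j)` of a connected graph `G` with `T_ij` common
neighbors of `i` and `j`, the effective resistance satisfies
`(e_i − e_j)ᵀ L_G⁺ (e_i − e_j) ≤ 2/(T_ij + 2)`. -/
theorem effective_resistance_le_two_div_common_neighbors
    {V : Type*} [Fintype V] [DecidableEq V]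
    (G : SimpleGraph V) [DecidableRel G.Adj] (hconn : G.Connected)
    (i j : V) (hadj : G.Adj i j)
    (M : Matrix V V ℝ) (hM : IsMoorePenroseInverse (G.lapMatrix ℝ) M) :
    (Pi.single i 1 - Pi.single j 1) ⬝ᵥ M *ᵥ (Pi.single i 1 - Pi.single j 1)
      ≤ 2 / (((G.neighborFinset i ∩ G.neighborFinset j).card : ℝ) + 2) := by
  classical
  set S := G.neighborFinset i ∩ G.neighborFinset j with hS
  set t : ℝ := (S.card : ℝ) with ht
  have ht0 : (0:ℝ) ≤ t := Nat.cast_nonneg _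
  have htpos : (0:ℝ) < t + 2 := by linarith
  have htne : t + 2 ≠ 0 := ne_of_gt htpos
  set r : ℝ := 1 / (t + 2) with hr
  set x : V → ℝ := Pi.single i 1 - Pi.single j 1 with hx
  have hij : i ≠ j := G.ne_of_adj hadj
  have hadj' : G.Adj j i := hadj.symm
  have hkS : ∀ k ∈ S, G.Adj i k ∧ G.Adj j k := by
    intro k hk
    rw [hS, Finset.mem_inter, SimpleGraph.mem_neighborFinset,
      SimpleGraph.mem_neighborFinset] at hk
    exact hk
  -- the flow
  set u0 : V × V → ℝ := Pi.single (i,j) 1 - Pi.single (j,i) 1 with hu0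
  set uk : V → V × V → ℝ := fun k =>
    Pi.single (i,k) 1 - Pi.single (k,i) 1 + Pi.single (k,j) 1 - Pi.single (j,k) 1 with huk
  set f : V × V → ℝ := r • u0 + (r/2) • ∑ k ∈ S, uk k with hf
  -- columns of the incidence matrix
  have hcol : ∀ a b : V, G.Adj a b →
      (incidence G *ᵥ (Pi.single (a,b) 1 : V × V → ℝ))
        = (Pi.single a 1 - Pi.single b 1 : V → ℝ) := by
    intro a b hab
    ext v
    simp [incidence, hab, Pi.single_apply]
  have hCu0 : incidence G *ᵥ u0 = (2:ℝ) • x := by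
    rw [hu0, mulVec_sub, hcol i j hadj, hcol j i hadj']
    ext v
    simp [hx]
    ring
  have hCuk : ∀ k ∈ S, incidence G *ᵥ uk k = (2:ℝ) • x := by
    intro k hk
    obtain ⟨hik, hjk⟩ := hkS k hk
    rw [huk]
    simp only []
    rw [mulVec_sub, mulVec_add, mulVec_sub, hcol i k hik, hcol k i hik.symm,
      hcol k j hjk.symm, hcol j k hjk]
    ext v
    simp [hx]
    ring
  have hCsum : incidence G *ᵥ (∑ k ∈ S, uk k) = ∑ k ∈ S, incidence G *ᵥ uk k := by
    have := map_sum (Matrix.mulVecLin (incidence G)) uk S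
    simpa only [Matrix.mulVecLin_apply] using this
  have hCf : incidence G *ᵥ f = x := by
    rw [hf, mulVec_add, mulVec_smul, mulVec_smul, hCu0, hCsum]
    rw [Finset.sum_congr rfl hCuk, Finset.sum_const]
    ext v
    simp only [Pi.add_apply, Pi.smul_apply, smul_eq_mul, nsmul_eq_mul, Pi.mul_apply, Pi.natCast_apply]
    rw [hr]
    field_simp
    ring
  -- dot products
  have dot_single : ∀ p q : V × V,
      (Pi.single p 1 : V × V → ℝ) ⬝ᵥ Pi.single q 1 = if p = q then 1 else 0 := by
    intro p q
    rw [single_dotProduct, one_mul, Pi.single_apply]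
  have d00 : u0 ⬝ᵥ u0 = 2 := by
    rw [hu0]
    rw [dotProduct_sub, sub_dotProduct, sub_dotProduct, dot_single, dot_single,
      dot_single, dot_single]
    simp [Prod.ext_iff, hij, hij.symm]
    norm_num
  have d0k : ∀ k ∈ S, u0 ⬝ᵥ uk k = 0 := by
    intro k hk
    obtain ⟨hik, hjk⟩ := hkS k hk
    have hki : k ≠ i := hik.ne'
    have hkj : k ≠ j := hjk.ne'
    rw [hu0, huk]
    simp only [dotProduct_add, dotProduct_sub, add_dotProduct, sub_dotProduct, dot_single]
    simp [Prod.ext_iff, hij, hki, hkj, hij.symm, hki.symm, hkj.symm]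
  have dkk : ∀ k ∈ S, uk k ⬝ᵥ uk k = 4 := by
    intro k hk
    obtain ⟨hik, hjk⟩ := hkS k hk
    have hki : k ≠ i := hik.ne'
    have hkj : k ≠ j := hjk.ne'
    rw [huk]
    simp only [dotProduct_add, dotProduct_sub, add_dotProduct, sub_dotProduct, dot_single]
    simp [Prod.ext_iff, hij, hki, hkj, hij.symm, hki.symm, hkj.symm]
    norm_num
  have dkk' : ∀ k ∈ S, ∀ k' ∈ S, k ≠ k' → uk k ⬝ᵥ uk k' = 0 := by
    intro k hk k' hk' hne
    obtain ⟨hik, hjk⟩ := hkS k hk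
    obtain ⟨hik', hjk'⟩ := hkS k' hk'
    have hki : k ≠ i := hik.ne'
    have hkj : k ≠ j := hjk.ne'
    have hki' : k' ≠ i := hik'.ne'
    have hkj' : k' ≠ j := hjk'.ne'
    rw [huk]
    simp only [dotProduct_add, dotProduct_sub, add_dotProduct, sub_dotProduct, dot_single]
    simp [Prod.ext_iff, hij, hki, hkj, hki', hkj', hne, hij.symm, hki.symm, hkj.symm,
      hki'.symm, hkj'.symm, hne.symm]
  -- compute f ⬝ᵥ f
  have hsum0 : u0 ⬝ᵥ (∑ k ∈ S, uk k) = 0 := by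
    rw [dotProduct_sum']
    exact Finset.sum_eq_zero d0k
  have hsumsum : (∑ k ∈ S, uk k) ⬝ᵥ (∑ k ∈ S, uk k) = 4 * t := by
    rw [dotProduct_comm, dotProduct_sum']
    have : ∀ k ∈ S, (∑ k' ∈ S, uk k') ⬝ᵥ uk k = 4 := by
      intro k hk
      rw [dotProduct_comm, dotProduct_sum']
      rw [Finset.sum_eq_single k (fun k' hk' hne => dkk' k hk k' hk' (fun h => hne h.symm))
        (fun h => absurd hk h)]
      exact dkk k hk
    rw [Finset.sum_congr rfl this, Finset.sum_const, ht, nsmul_eq_mul]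
    ring
  have hff : f ⬝ᵥ f = r^2 * (t + 2) := by
    rw [hf]
    rw [dotProduct_add, add_dotProduct, add_dotProduct, smul_dotProduct, smul_dotProduct,
      smul_dotProduct, smul_dotProduct, dotProduct_smul, dotProduct_smul, dotProduct_smul,
      dotProduct_smul, d00, hsum0, hsumsum, dotProduct_comm (∑ k ∈ S, uk k) u0, hsum0]
    simp only [smul_eq_mul]
    ring
  -- conclude
  have hkey := key_ineq G M hM f
  rw [hCf, hff] at hkey
  have : 2 * (r^2 * (t + 2)) = 2 / (t + 2) := by
    rw [hr]; field_simp
  rw [this] at hkey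
  exact hkey
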